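/- For n > 0, the weighted partition function Z₁(n) = ∫_{ℝ²} |w1|·exp(-n·w1^2·w2^4)·(1/(2π))·exp(-(w1^2+w2^2)/2) dw1 dw2 satisfies n^{1/4}·Z₁(n) → (2^{-5/4}/π)·Γ(3/4)·Γ(1/4) as n → ∞. -/

import Mathlib

open Real MeasureTheory Filter

open Set

/-- Weighted partition function with weight `|w1|` for `f(w1,w2) = w1^2 w2^4`. -/
noncomputable def Z1b (n : ℝ) : ℝ :=
  ∫ w1 : ℝ, ∫ w2 : ℝ,
    |w1| * Real.exp (-(n * (w1 ^ 2 * w2 ^ 4))) *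
      (1 / (2 * π) * Real.exp (-(w1 ^ 2 + w2 ^ 2) / 2))

lemma integral_mul_exp_neg_mul_sq_Ioi {b : ℝ} (hb : 0 < b) :
    ∫ x in Ioi (0:ℝ), x * Real.exp (-(b * x ^ 2)) = 1 / (2 * b) := by
  have A : ∀ x : ℝ, HasDerivAt (fun y : ℝ => -(2 * b)⁻¹ * Real.exp (-(b * y ^ 2)))
      (x * Real.exp (-(b * x ^ 2))) x := by
    intro x
    have h1 : HasDerivAt (fun y : ℝ => -(b * y ^ 2)) (-(b * (2 * x))) x := by
      simpa using (((hasDerivAt_pow 2 x).const_mul b).fun_neg)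
    have := (h1.exp.const_mul (-(2 * b)⁻¹))
    refine this.congr_deriv ?_
    field_simp
  have B : Tendsto (fun y : ℝ => -(2 * b)⁻¹ * Real.exp (-(b * y ^ 2))) atTop
      (nhds (-(2 * b)⁻¹ * 0)) := by
    apply Tendsto.const_mul
    have : Tendsto (fun y : ℝ => -(b * y ^ 2)) atTop atBot := by
      simpa [neg_mul] using (tendsto_pow_atTop two_ne_zero).const_mul_atTop_of_neg
        (neg_lt_zero.2 hb)
    exact Real.tendsto_exp_atBot.comp this
  have hint : IntegrableOn (fun x : ℝ => x * Real.exp (-(b * x ^ 2))) (Ioi 0) := by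
    have := (integrable_mul_exp_neg_mul_sq hb).integrableOn (s := Ioi 0)
    simpa [neg_mul] using this
  have := integral_Ioi_of_hasDerivAt_of_tendsto' (fun x _ => A x) hint B
  rw [this]
  norm_num

lemma integral_abs_mul_exp_neg_mul_sq {b : ℝ} (hb : 0 < b) :
    ∫ x : ℝ, |x| * Real.exp (-(b * x ^ 2)) = 1 / b := by
  have h2 := integral_comp_abs (f := fun t : ℝ => t * Real.exp (-(b * t ^ 2)))
  simp only [sq_abs] at h2
  rw [h2, integral_mul_exp_neg_mul_sq_Ioi hb]
  field_simp

lemma integral_exp_neg_mul_Ioi {c : ℝ} (hc : 0 < c) :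
    ∫ t in Ioi (0:ℝ), Real.exp (-(c * t)) = c⁻¹ := by
  have := Real.integral_rpow_mul_exp_neg_mul_Ioi zero_lt_one hc
  simpa [Real.Gamma_one] using this

lemma integral_exp_neg_mul_quartic_Ioi {r : ℝ} (hr : 0 < r) :
    ∫ x in Ioi (0:ℝ), Real.exp (-(r * x ^ 4)) =
      (1 / r) ^ ((1:ℝ)/4) * Real.Gamma (1/4) / 4 := by
  have key := integral_comp_rpow_Ioi
    (fun y : ℝ => y ^ ((1:ℝ)/4 - 1) * Real.exp (-(r * y))) (p := 4) (by norm_num)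
  have hL : ∫ x in Ioi (0:ℝ), (|(4:ℝ)| * x ^ ((4:ℝ) - 1)) •
      ((fun y : ℝ => y ^ ((1:ℝ)/4 - 1) * Real.exp (-(r * y))) (x ^ (4:ℝ)))
      = ∫ x in Ioi (0:ℝ), 4 * Real.exp (-(r * x ^ 4)) := by
    refine setIntegral_congr_fun measurableSet_Ioi (fun x hx => ?_)
    have hx0 : (0:ℝ) < x := hx
    have h4 : x ^ (4:ℝ) = x ^ (4:ℕ) := by
      rw [show ((4:ℝ)) = ((4:ℕ):ℝ) by norm_num, Real.rpow_natCast]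
    have hpow : (x ^ (4:ℝ)) ^ ((1:ℝ)/4 - 1) = x ^ (-(3:ℝ)) := by
      rw [← Real.rpow_mul hx0.le]
      norm_num
    have hmul : x ^ ((4:ℝ) - 1) * x ^ (-(3:ℝ)) = 1 := by
      rw [← Real.rpow_add hx0]; norm_num
    simp only [smul_eq_mul]
    rw [hpow, h4, abs_of_nonneg (by norm_num : (0:ℝ) ≤ 4)]
    linear_combination (4 * Real.exp (-(r * x ^ 4))) * hmul
  rw [hL] at key
  have hR : ∫ y in Ioi (0:ℝ), y ^ ((1:ℝ)/4 - 1) * Real.exp (-(r * y))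
      = (1 / r) ^ ((1:ℝ)/4) * Real.Gamma (1/4) :=
    Real.integral_rpow_mul_exp_neg_mul_Ioi (by norm_num) hr
  rw [hR] at key
  rw [MeasureTheory.integral_const_mul] at key
  linarith

lemma integral_exp_neg_mul_quartic {r : ℝ} (hr : 0 < r) :
    ∫ x : ℝ, Real.exp (-(r * x ^ 4)) =
      (1 / r) ^ ((1:ℝ)/4) * Real.Gamma (1/4) / 2 := by
  have habs : ∀ x : ℝ, |x| ^ 4 = x ^ 4 := fun x => by
    rw [← abs_pow]; exact abs_of_nonneg (by positivity)
  have h2 := integral_comp_abs (f := fun t : ℝ => Real.exp (-(r * t ^ 4)))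
  simp only [habs] at h2
  rw [h2, integral_exp_neg_mul_quartic_Ioi hr]
  ring

lemma integrable_inv_quartic : Integrable (fun u : ℝ => (u ^ 4 + 1/2)⁻¹) := by
  refine (integrable_inv_one_add_sq.const_mul 3).mono' ?_ ?_
  · exact (Continuous.inv₀ (by continuity) (fun u => by positivity)).aestronglyMeasurable
  · filter_upwards with u
    have h1 : (0:ℝ) < u ^ 4 + 1/2 := by positivity
    have h2 : (0:ℝ) < 1 + u ^ 2 := by positivity
    rw [Real.norm_eq_abs, abs_of_nonneg (by positivity)]
    rw [inv_eq_one_div, show (3:ℝ) * (1 + u ^ 2)⁻¹ = 3 / (1 + u ^ 2) by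
      rw [inv_eq_one_div]; ring, div_le_div_iff₀ h1 h2]
    nlinarith [sq_nonneg (2 * u ^ 2 - 1), sq_nonneg (u ^ 2)]

lemma inner_exp_int (u : ℝ) :
    ∫ t in Ioi (0:ℝ), Real.exp (-((u ^ 4 + 1/2) * t)) = (u ^ 4 + 1/2)⁻¹ :=
  integral_exp_neg_mul_Ioi (by positivity)

lemma L_eq : ∫ u : ℝ, ((u:ℝ) ^ 4 + 1/2)⁻¹
    = 2 ^ ((3:ℝ)/4) * (Real.Gamma (1/4) * Real.Gamma (3/4)) / 2 := by
  have hK : Integrable (Function.uncurry fun u t : ℝ => Real.exp (-((u ^ 4 + 1/2) * t)))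
      (volume.prod (volume.restrict (Ioi 0))) := by
    have hmeas : AEStronglyMeasurable
        (Function.uncurry fun u t : ℝ => Real.exp (-((u ^ 4 + 1/2) * t)))
        (volume.prod (volume.restrict (Ioi 0))) := by
      apply Continuous.aestronglyMeasurable
      simp only [Function.uncurry_def]
      fun_prop
    rw [MeasureTheory.integrable_prod_iff hmeas]
    constructor
    · filter_upwards with u
      have h := exp_neg_integrableOn_Ioi 0 (show (0:ℝ) < u ^ 4 + 1/2 by positivity)
      simpa only [IntegrableOn, Function.uncurry_apply_pair, neg_mul] using h
    · apply Integrable.congr integrable_inv_quartic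
      filter_upwards with u
      simp only [Function.uncurry, Real.norm_eq_abs, Real.abs_exp]
      exact (inner_exp_int u).symm
  have swap := MeasureTheory.integral_integral_swap
    (f := fun u t : ℝ => Real.exp (-((u ^ 4 + 1/2) * t)))
    (μ := volume) (ν := volume.restrict (Ioi 0)) hK
  beta_reduce at swap
  have lhs_eq : ∫ u : ℝ, ((u:ℝ) ^ 4 + 1/2)⁻¹
      = ∫ u : ℝ, ∫ t in Ioi (0:ℝ), Real.exp (-((u ^ 4 + 1/2) * t)) := by
    exact integral_congr_ae (Eventually.of_forall fun u => (inner_exp_int u).symm)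
  rw [lhs_eq, swap]
  have inner2 : ∀ t ∈ Ioi (0:ℝ),
      (∫ u : ℝ, Real.exp (-((u ^ 4 + 1/2) * t)))
        = Real.Gamma (1/4) / 2 * (t ^ ((3:ℝ)/4 - 1) * Real.exp (-(1/2 * t))) := by
    intro t ht
    have ht0 : (0:ℝ) < t := ht
    have e1 : ∀ u : ℝ, Real.exp (-((u ^ 4 + 1/2) * t))
        = Real.exp (-(t * u ^ 4)) * Real.exp (-(1/2 * t)) := by
      intro u; rw [← Real.exp_add]; ring_nf
    simp only [e1]
    rw [MeasureTheory.integral_mul_const, integral_exp_neg_mul_quartic ht0]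
    have h14 : (1 / t) ^ ((1:ℝ)/4) = t ^ ((3:ℝ)/4 - 1) := by
      rw [one_div, ← Real.rpow_neg_one t, ← Real.rpow_mul ht0.le]
      norm_num
    rw [h14]; ring
  rw [setIntegral_congr_fun measurableSet_Ioi inner2, MeasureTheory.integral_const_mul,
    Real.integral_rpow_mul_exp_neg_mul_Ioi (by norm_num) (by norm_num : (0:ℝ) < 1/2)]
  rw [show (1:ℝ) / (1/2) = 2 by norm_num]
  ring

lemma Z1b_eq {n : ℝ} (hn : 0 ≤ n) :
    Z1b n = ∫ w2 : ℝ, 1/(2*π) * Real.exp (-(w2^2)/2) * (n * w2^4 + 1/2)⁻¹ := by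
  have h1 : Integrable (fun x : ℝ => |x| * Real.exp (-(x^2)/2)) := by
    apply (integrable_mul_exp_neg_mul_sq (b := 1/2) (by norm_num)).abs.congr
    filter_upwards with x
    rw [abs_mul, Real.abs_exp, show -(1/2:ℝ) * x^2 = -(x^2)/2 by ring]
  have hφ : Integrable (fun x : ℝ => |x| * (1/(2*π) * Real.exp (-(x^2)/2))) := by
    apply (h1.const_mul (1/(2*π))).congr
    filter_upwards with x
    ring
  have hψ : Integrable (fun y : ℝ => Real.exp (-(y^2)/2)) := by
    apply (integrable_exp_neg_mul_sq (b := 1/2) (by norm_num)).congr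
    filter_upwards with y
    rw [show -(1/2:ℝ) * y^2 = -(y^2)/2 by ring]
  have hg : Integrable (fun p : ℝ × ℝ =>
      (|p.1| * (1/(2*π) * Real.exp (-(p.1^2)/2))) * Real.exp (-(p.2^2)/2))
      (volume.prod volume) := hφ.mul_prod hψ
  have hf : Integrable (Function.uncurry fun w1 w2 : ℝ =>
      |w1| * Real.exp (-(n * (w1 ^ 2 * w2 ^ 4))) *
        (1 / (2 * π) * Real.exp (-(w1 ^ 2 + w2 ^ 2) / 2))) (volume.prod volume) := by
    apply hg.mono'
    · apply Continuous.aestronglyMeasurable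
      simp only [Function.uncurry_def]
      fun_prop
    · filter_upwards with p
      rcases p with ⟨w1, w2⟩
      simp only [Function.uncurry]
      rw [Real.norm_eq_abs, abs_of_nonneg (by positivity)]
      have hE : Real.exp (-(n * (w1 ^ 2 * w2 ^ 4))) ≤ 1 := by
        rw [Real.exp_le_one_iff]
        have : 0 ≤ n * (w1 ^ 2 * w2 ^ 4) := mul_nonneg hn (by positivity)
        linarith
      calc |w1| * Real.exp (-(n * (w1 ^ 2 * w2 ^ 4))) *
            (1 / (2 * π) * Real.exp (-(w1 ^ 2 + w2 ^ 2) / 2))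
          ≤ |w1| * 1 * (1 / (2 * π) * Real.exp (-(w1 ^ 2 + w2 ^ 2) / 2)) := by
            have hπ : (0:ℝ) < π := Real.pi_pos
            gcongr
        _ = (|w1| * (1/(2*π) * Real.exp (-(w1^2)/2))) * Real.exp (-(w2^2)/2) := by
            rw [show -(w1^2 + w2^2)/2 = -(w1^2)/2 + -(w2^2)/2 by ring, Real.exp_add]
            ring
  have swap := MeasureTheory.integral_integral_swap
    (f := fun w1 w2 : ℝ =>
      |w1| * Real.exp (-(n * (w1 ^ 2 * w2 ^ 4))) *
        (1 / (2 * π) * Real.exp (-(w1 ^ 2 + w2 ^ 2) / 2)))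
    (μ := volume) (ν := volume) hf
  beta_reduce at swap
  rw [Z1b, swap]
  refine integral_congr_ae (Eventually.of_forall fun w2 => ?_)
  have hb : (0:ℝ) < n * w2^4 + 1/2 := by
    have : 0 ≤ n * w2^4 := mul_nonneg hn (by positivity)
    linarith
  have key : ∀ w1 : ℝ,
      |w1| * Real.exp (-(n * (w1 ^ 2 * w2 ^ 4))) *
        (1 / (2 * π) * Real.exp (-(w1 ^ 2 + w2 ^ 2) / 2))
      = (1/(2*π) * Real.exp (-(w2^2)/2)) *
        (|w1| * Real.exp (-((n * w2^4 + 1/2) * w1^2))) := by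
    intro w1
    have hexp : -(n * (w1^2 * w2^4)) + -(w1^2 + w2^2)/2
        = -(w2^2)/2 + -((n * w2^4 + 1/2) * w1^2) := by ring
    calc |w1| * Real.exp (-(n * (w1 ^ 2 * w2 ^ 4))) *
          (1 / (2 * π) * Real.exp (-(w1 ^ 2 + w2 ^ 2) / 2))
        = 1/(2*π) * (|w1| * Real.exp (-(n * (w1^2 * w2^4)) + -(w1^2 + w2^2)/2)) := by
          rw [Real.exp_add]; ring
      _ = (1/(2*π) * Real.exp (-(w2^2)/2)) *
          (|w1| * Real.exp (-((n * w2^4 + 1/2) * w1^2))) := by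
          rw [hexp, Real.exp_add]; ring
  beta_reduce
  rw [integral_congr_ae (Eventually.of_forall key), MeasureTheory.integral_const_mul,
    integral_abs_mul_exp_neg_mul_sq hb, one_div (n * w2^4 + 1/2)]

lemma Z1b_scaled {n : ℝ} (hn : 1 ≤ n) :
    n ^ ((1:ℝ)/4) * Z1b n
      = 1/(2*π) * ∫ u : ℝ, Real.exp (-(u^2 / (2 * n ^ ((1:ℝ)/2)))) * (u^4 + 1/2)⁻¹ := by
  have h0 : (0:ℝ) < n := by linarith
  rw [Z1b_eq h0.le]
  set c : ℝ := n ^ (-(1/4) : ℝ) with hc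
  have hcpos : 0 < c := Real.rpow_pos_of_pos h0 _
  have hcinv : c⁻¹ = n ^ ((1:ℝ)/4) := by
    rw [hc, ← Real.rpow_neg h0.le, neg_neg]
  have hsub := MeasureTheory.Measure.integral_comp_mul_left
    (fun w2 : ℝ => 1/(2*π) * Real.exp (-(w2^2)/2) * (n * w2^4 + 1/2)⁻¹) c
  rw [abs_of_pos (inv_pos.mpr hcpos), smul_eq_mul, hcinv] at hsub
  beta_reduce at hsub
  rw [← hsub]
  have hpt : ∀ u : ℝ,
      1/(2*π) * Real.exp (-((c*u)^2)/2) * (n * (c*u)^4 + 1/2)⁻¹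
        = 1/(2*π) * (Real.exp (-(u^2 / (2 * n ^ ((1:ℝ)/2)))) * (u^4 + 1/2)⁻¹) := by
    intro u
    have hc2 : c^2 = (n ^ ((1:ℝ)/2))⁻¹ := by
      rw [hc, ← Real.rpow_natCast (n ^ (-(1/4):ℝ)) 2, ← Real.rpow_mul h0.le,
        ← Real.rpow_neg h0.le]
      norm_num
    have hc4 : c^4 = n⁻¹ := by
      rw [hc, ← Real.rpow_natCast (n ^ (-(1/4):ℝ)) 4, ← Real.rpow_mul h0.le,
        show (-(1/4):ℝ) * ((4:ℕ):ℝ) = -1 by norm_num, Real.rpow_neg_one]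
    have e2 : n * (c*u)^4 = u^4 := by
      rw [mul_pow, hc4]; field_simp
    have e1 : -((c*u)^2)/2 = -(u^2 / (2 * n ^ ((1:ℝ)/2))) := by
      rw [mul_pow, hc2]
      have hnn : (0:ℝ) < n ^ ((1:ℝ)/2) := Real.rpow_pos_of_pos h0 _
      field_simp
    rw [e2, e1]
    ring
  rw [integral_congr_ae (Eventually.of_forall hpt), MeasureTheory.integral_const_mul]

lemma step3 :
    Tendsto (fun n : ℝ => ∫ u : ℝ, Real.exp (-(u^2 / (2 * n ^ ((1:ℝ)/2)))) * (u^4 + 1/2)⁻¹)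
      atTop (nhds (∫ u : ℝ, ((u:ℝ)^4 + 1/2)⁻¹)) := by
  apply MeasureTheory.tendsto_integral_filter_of_dominated_convergence
    (fun u : ℝ => (u^4 + 1/2)⁻¹)
  · filter_upwards with n
    exact (Continuous.mul (by fun_prop)
      (Continuous.inv₀ (by fun_prop) (fun u => by positivity))).aestronglyMeasurable
  · filter_upwards [eventually_ge_atTop (1:ℝ)] with n hn
    filter_upwards with u
    have h0 : (0:ℝ) < n := by linarith
    have hnn : (0:ℝ) < n ^ ((1:ℝ)/2) := Real.rpow_pos_of_pos h0 _
    have hq : (0:ℝ) < u^4 + 1/2 := by positivity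
    rw [Real.norm_eq_abs, abs_of_nonneg (by positivity)]
    have hE : Real.exp (-(u^2 / (2 * n ^ ((1:ℝ)/2)))) ≤ 1 := by
      rw [Real.exp_le_one_iff]
      have : 0 ≤ u^2 / (2 * n ^ ((1:ℝ)/2)) := by positivity
      linarith
    calc Real.exp (-(u^2 / (2 * n ^ ((1:ℝ)/2)))) * (u^4 + 1/2)⁻¹
        ≤ 1 * (u^4 + 1/2)⁻¹ := by gcongr
      _ = (u^4 + 1/2)⁻¹ := one_mul _
  · exact integrable_inv_quartic
  · filter_upwards with u
    have harg : Tendsto (fun n : ℝ => -(u^2 / (2 * n ^ ((1:ℝ)/2)))) atTop (nhds 0) := by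
      rw [show (0:ℝ) = -0 by norm_num]
      apply Tendsto.neg
      apply Tendsto.div_atTop (tendsto_const_nhds (x := u^2))
      exact (tendsto_rpow_atTop (by norm_num : (0:ℝ) < 1/2)).const_mul_atTop
        (by norm_num : (0:ℝ) < 2)
    have hexp : Tendsto (fun n : ℝ => Real.exp (-(u^2 / (2 * n ^ ((1:ℝ)/2))))) atTop
        (nhds 1) := by
      have := (Real.continuous_exp.tendsto 0).comp harg
      simpa [Function.comp_def] using this
    have := hexp.mul_const ((u^4 + 1/2)⁻¹)
    simpa using this

/-- `n^(1/4)·Z₁(n) → (2^(-5/4)/π)·Γ(3/4)·Γ(1/4)` as `n → ∞`. -/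
theorem Z1b_asymptotic :
    Tendsto (fun n : ℝ => n ^ (1/4 : ℝ) * Z1b n) atTop
      (nhds ((2 : ℝ) ^ (-(5/4) : ℝ) / π * Real.Gamma (3/4) * Real.Gamma (1/4))) := by
  have hval : 1/(2*π) * (2 ^ ((3:ℝ)/4) * (Real.Gamma (1/4) * Real.Gamma (3/4)) / 2)
      = (2 : ℝ) ^ (-(5/4) : ℝ) / π * Real.Gamma (3/4) * Real.Gamma (1/4) := by
    have h2 : (2:ℝ) ^ ((3:ℝ)/4) = (2:ℝ) ^ (-(5/4) : ℝ) * 4 := by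
      rw [show ((3:ℝ)/4) = -(5/4) + 2 by norm_num,
        Real.rpow_add (by norm_num : (0:ℝ) < 2),
        show ((2:ℝ)) = ((2:ℕ):ℝ) by norm_num, Real.rpow_natCast]
      norm_num
    rw [h2]
    have hπ : π ≠ 0 := Real.pi_ne_zero
    field_simp
    ring
  have h := step3.const_mul (1/(2*π))
  rw [L_eq, hval] at h
  apply h.congr'
  filter_upwards [eventually_ge_atTop (1:ℝ)] with n hn
  exact (Z1b_scaled hn).symm
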